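/- No nonzero matrix of M₂(ℤ) satisfies the Goodearl–Menal condition; equivalently, if A ∈ M₂(ℤ) satisfies the GM condition then A = 0. -/

import Mathlib

open Matrix

abbrev M2 := Matrix (Fin 2) (Fin 2) ℤ

def GMcond (A : M2) : Prop :=
  ∀ X : M2, ∃ U : M2ˣ, IsUnit (X - (U : M2)) ∧ IsUnit (A - ((U⁻¹ : M2ˣ) : M2))

lemma extract (p q r s : ℤ) (hGM : GMcond !![p, q; r, s]) (x y z w : ℤ) :
    ∃ a b c d ε η θ : ℤ, (ε = 1 ∨ ε = -1) ∧ (η = 1 ∨ η = -1) ∧ (θ = 1 ∨ θ = -1) ∧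
      a * d - b * c = ε ∧
      (x - a) * (w - d) - (y - b) * (z - c) = η ∧
      (p - ε * d) * (s - ε * a) - (q + ε * b) * (r + ε * c) = θ := by
  obtain ⟨U, h1, h2⟩ := hGM !![x, y; z, w]
  set a := (U : M2) 0 0 with ha
  set b := (U : M2) 0 1 with hb
  set c := (U : M2) 1 0 with hc
  set d := (U : M2) 1 1 with hd
  set ε := (U : M2).det with hε
  have hεpm : ε = 1 ∨ ε = -1 := Int.isUnit_iff.mp ((Matrix.isUnit_iff_isUnit_det _).mp U.isUnit)
  have hε2 : ε * ε = 1 := by rcases hεpm with h | h <;> rw [h] <;> norm_num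
  have hinv : ((U⁻¹ : M2ˣ) : M2) = ε • (U : M2).adjugate := by
    rw [Matrix.coe_units_inv]
    refine Matrix.inv_eq_left_inv ?_
    rw [smul_mul_assoc, Matrix.adjugate_mul, smul_smul, ← hε, hε2, one_smul]
  have hE1 : a * d - b * c = ε := (Matrix.det_fin_two _).symm
  have hη : ((!![x, y; z, w] - (U : M2)).det = 1 ∨ (!![x, y; z, w] - (U : M2)).det = -1) :=
    Int.isUnit_iff.mp ((Matrix.isUnit_iff_isUnit_det _).mp h1)
  have hθ : ((!![p, q; r, s] - ((U⁻¹ : M2ˣ) : M2)).det = 1 ∨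
      (!![p, q; r, s] - ((U⁻¹ : M2ˣ) : M2)).det = -1) :=
    Int.isUnit_iff.mp ((Matrix.isUnit_iff_isUnit_det _).mp h2)
  refine ⟨a, b, c, d, ε, _, _, hεpm, hη, hθ, hE1, ?_, ?_⟩
  · rw [Matrix.det_fin_two]
    simp [Matrix.sub_apply]
    rfl
  · rw [Matrix.det_fin_two, hinv, Matrix.adjugate_fin_two]
    simp [Matrix.sub_apply, Matrix.smul_apply]
    rfl

lemma stepA (p q r s : ℤ) (hGM : GMcond !![p, q; r, s]) : p * s - q * r = 0 := by
  obtain ⟨a, b, c, d, ε, η, θ, hε, hη, hθ, e1, e2, e3⟩ :=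
    extract p q r s hGM (5 * s) (-(5 * q)) (-(5 * r)) (5 * p)
  obtain ⟨D, hD⟩ : ∃ D, p * s - q * r = D := ⟨_, rfl⟩
  rw [hD]
  rcases hε with rfl | rfl
  · have key : 20 * D = η - 5 * θ + 4 := by
      rw [← hD]; linear_combination e2 - 5 * e3 + 4 * e1
    rcases hη with rfl | rfl <;> rcases hθ with rfl | rfl <;> omega
  · have key : 30 * D = η + 5 * θ + 6 := by
      rw [← hD]; linear_combination e2 + 5 * e3 - 6 * e1
    rcases hη with rfl | rfl <;> rcases hθ with rfl | rfl <;> omega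

lemma pm_of_mul_eq_pm {b c v : ℤ} (hv : v = 1 ∨ v = -1) (h : b * c = v) :
    (b = 1 ∨ b = -1) ∧ (c = 1 ∨ c = -1) := by
  have hb : IsUnit b := isUnit_of_mul_isUnit_left (h ▸ Int.isUnit_iff.mpr hv)
  have hc : IsUnit c := isUnit_of_mul_isUnit_right (h ▸ Int.isUnit_iff.mpr hv)
  exact ⟨Int.isUnit_iff.mp hb, Int.isUnit_iff.mp hc⟩

lemma L3 (k : ℤ) (hk : 0 < k) (hGM : GMcond !![k, 0; 0, 0]) : False := by
  by_cases hk1 : k = 1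
  · subst hk1
    obtain ⟨a, b, c, d, ε, η, θ, hε, hη, hθ, e1, e2, e3⟩ := extract 1 0 0 0 hGM 0 4 4 2
    have ha : a = 1 - ε * θ := by
      rcases hε with rfl | rfl
      · linear_combination e1 - e3
      · linear_combination e3 - e1
    have ha2 : a = 0 ∨ a = 2 := by
      rcases hε with rfl | rfl <;> rcases hθ with rfl | rfl <;> norm_num at ha <;> omega
    rcases ha2 with rfl | rfl
    · have hbc : b * c = -ε := by linear_combination -e1
      obtain ⟨hb, hc⟩ := pm_of_mul_eq_pm (by rcases hε with rfl | rfl <;> norm_num) hbc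
      rcases hb with rfl | rfl <;> rcases hc with rfl | rfl <;>
        rcases hη with rfl | rfl <;> norm_num at e2
    · have hbc : b * c = 2 * d - ε := by linear_combination -e1
      have hodd : Odd (b * c) := by
        rcases hε with rfl | rfl
        · exact ⟨d - 1, by linarith⟩
        · exact ⟨d, by linarith⟩
      obtain ⟨hob, hoc⟩ := Int.odd_mul.mp hodd
      obtain ⟨u, rfl⟩ := hob
      obtain ⟨v, rfl⟩ := hoc
      have key : 4 * (2 * u + 1) + 4 * (2 * v + 1) = 20 + η - ε := by
        linear_combination e2 - e1
      rcases hη with rfl | rfl <;> rcases hε with rfl | rfl <;> omega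
  · by_cases hk2 : k = 2
    · subst hk2
      obtain ⟨a, b, c, d, ε, η, θ, hε, hη, hθ, e1, e2, e3⟩ := extract 2 0 0 0 hGM 0 5 5 1
      have ha : 2 * a = 1 - ε * θ := by
        rcases hε with rfl | rfl
        · linear_combination e1 - e3
        · linear_combination e3 - e1
      have ha2 : a = 0 ∨ a = 1 := by
        rcases hε with rfl | rfl <;> rcases hθ with rfl | rfl <;> norm_num at ha <;> omega
      rcases ha2 with rfl | rfl
      · have hbc : b * c = -ε := by linear_combination -e1
        obtain ⟨hb, hc⟩ := pm_of_mul_eq_pm (by rcases hε with rfl | rfl <;> norm_num) hbc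
        rcases hb with rfl | rfl <;> rcases hc with rfl | rfl <;>
          rcases hη with rfl | rfl <;> norm_num at e2
      · have key : 5 * b + 5 * c = 26 + η - ε := by linear_combination e2 - e1
        rcases hη with rfl | rfl <;> rcases hε with rfl | rfl <;> omega
    · have hk3 : 3 ≤ k := by omega
      obtain ⟨a, b, c, d, ε, η, θ, hε, hη, hθ, e1, e2, e3⟩ := extract k 0 0 0 hGM 0 3 3 0
      have ha : k * a = 1 - ε * θ := by
        rcases hε with rfl | rfl
        · linear_combination e1 - e3
        · linear_combination e3 - e1
      have ha2 : k * a = 0 ∨ k * a = 2 := by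
        rcases hε with rfl | rfl <;> rcases hθ with rfl | rfl
        · exact Or.inl (by linarith)
        · exact Or.inr (by linarith)
        · exact Or.inr (by linarith)
        · exact Or.inl (by linarith)
      rcases ha2 with ha2 | ha2
      · have ha0 : a = 0 := by
          rcases mul_eq_zero.mp ha2 with h | h
          · omega
          · exact h
        subst ha0
        have hbc : b * c = -ε := by linear_combination -e1
        obtain ⟨hb, hc⟩ := pm_of_mul_eq_pm (by rcases hε with rfl | rfl <;> norm_num) hbc
        rcases hb with rfl | rfl <;> rcases hc with rfl | rfl <;>
          rcases hη with rfl | rfl <;> norm_num at e2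
      · have hdvd : k ∣ 2 := ⟨a, ha2.symm⟩
        have := Int.le_of_dvd (by norm_num) hdvd
        omega

lemma GM_transfer (A : M2) (hGM : GMcond A) (P Q : M2ˣ) :
    GMcond ((P : M2) * A * (Q : M2)) := by
  intro X
  obtain ⟨U, h1, h2⟩ := hGM ((Q : M2) * X * (P : M2))
  refine ⟨Q⁻¹ * U * P⁻¹, ?_, ?_⟩
  · have key : X - ((Q⁻¹ * U * P⁻¹ : M2ˣ) : M2) =
        ((Q⁻¹ : M2ˣ) : M2) * ((Q : M2) * X * (P : M2) - (U : M2)) * ((P⁻¹ : M2ˣ) : M2) := by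
      simp only [Units.val_mul]
      rw [mul_sub, sub_mul]
      congr 1
      refine Eq.symm ?_
      calc ((Q⁻¹ : M2ˣ) : M2) * ((Q : M2) * X * (P : M2)) * ((P⁻¹ : M2ˣ) : M2)
          = (((Q⁻¹ : M2ˣ) : M2) * (Q : M2)) * X * ((P : M2) * ((P⁻¹ : M2ˣ) : M2)) := by
            noncomm_ring
        _ = X := by
            rw [← Units.val_mul, ← Units.val_mul, inv_mul_cancel, mul_inv_cancel]
            simp
    rw [key]
    exact ((Units.isUnit Q⁻¹).mul h1).mul (Units.isUnit P⁻¹)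
  · have hrev : ((Q⁻¹ * U * P⁻¹)⁻¹ : M2ˣ) = P * U⁻¹ * Q := by
      rw [_root_.mul_inv_rev, _root_.mul_inv_rev]
      simp [mul_assoc]
    rw [hrev]
    have key : (P : M2) * A * (Q : M2) - ((P * U⁻¹ * Q : M2ˣ) : M2) =
        (P : M2) * (A - ((U⁻¹ : M2ˣ) : M2)) * (Q : M2) := by
      simp only [Units.val_mul]
      rw [mul_sub, sub_mul]
    rw [key]
    exact ((Units.isUnit P).mul h2).mul (Units.isUnit Q)

lemma isUnit_m (a b c d : ℤ) (h : a * d - b * c = 1 ∨ a * d - b * c = -1) :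
    IsUnit !![a, b; c, d] := by
  rw [Matrix.isUnit_iff_isUnit_det, Matrix.det_fin_two_of]
  exact Int.isUnit_iff.mpr h

lemma row_reduce (p q r s : ℤ) (hdet : p * s - q * r = 0) (h : p ≠ 0 ∨ r ≠ 0) :
    ∃ (P : M2ˣ) (g e : ℤ), 0 < g ∧ (P : M2) * !![p, q; r, s] = !![g, e; 0, 0] := by
  set g : ℤ := ↑(Int.gcd p r) with hg
  have hgpos : 0 < g := by
    have : Int.gcd p r ≠ 0 := by
      intro hc
      obtain ⟨h1, h2⟩ := Int.gcd_eq_zero_iff.mp hc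
      tauto
    positivity
  have hbez : g = p * Int.gcdA p r + r * Int.gcdB p r := Int.gcd_eq_gcd_ab p r
  set α := Int.gcdA p r with hα
  set β := Int.gcdB p r with hβ
  obtain ⟨p₁, hp⟩ : g ∣ p := Int.gcd_dvd_left p r
  obtain ⟨r₁, hr⟩ : g ∣ r := Int.gcd_dvd_right p r
  have hcop : α * p₁ + β * r₁ = 1 := by
    have h2 : g * (α * p₁ + β * r₁) = g * 1 := by
      rw [mul_one]
      calc g * (α * p₁ + β * r₁) = (g * p₁) * α + (g * r₁) * β := by ring
        _ = p * α + r * β := by rw [← hp, ← hr]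
        _ = g := by linarith [hbez]
    exact mul_left_cancel₀ (by omega) h2
  have hps : p₁ * s = q * r₁ := by
    have h3 : g * (p₁ * s - q * r₁) = 0 := by linear_combination hdet - s * hp + q * hr
    have := mul_eq_zero.mp h3
    rcases this with h | h
    · omega
    · linarith
  have hP : IsUnit !![α, β; -r₁, p₁] := isUnit_m _ _ _ _ (Or.inl (by linarith))
  refine ⟨hP.unit, g, α * q + β * s, hgpos, ?_⟩
  rw [IsUnit.unit_spec, Matrix.mul_fin_two]
  have e11 : α * p + β * r = g := by linarith
  have e21 : -r₁ * p + p₁ * r = 0 := by linear_combination (-r₁) * hp + p₁ * hr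
  have e22 : -r₁ * q + p₁ * s = 0 := by linear_combination hps
  rw [e11, e21, e22]

lemma col_reduce (g e : ℤ) (hg : 0 < g) :
    ∃ (Q : M2ˣ) (k : ℤ), 0 < k ∧ !![g, e; 0, 0] * (Q : M2) = !![k, 0; 0, 0] := by
  set G : ℤ := ↑(Int.gcd g e) with hG
  have hGpos : 0 < G := by
    have : Int.gcd g e ≠ 0 := by
      intro hc
      obtain ⟨h1, h2⟩ := Int.gcd_eq_zero_iff.mp hc
      omega
    positivity
  have hbez : G = g * Int.gcdA g e + e * Int.gcdB g e := Int.gcd_eq_gcd_ab g e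
  set μ := Int.gcdA g e with hμ
  set ν := Int.gcdB g e with hν
  obtain ⟨g₂, hg₂⟩ : G ∣ g := Int.gcd_dvd_left g e
  obtain ⟨e₂, he₂⟩ : G ∣ e := Int.gcd_dvd_right g e
  have hcop : μ * g₂ + ν * e₂ = 1 := by
    have h2 : G * (μ * g₂ + ν * e₂) = G * 1 := by
      rw [mul_one]
      calc G * (μ * g₂ + ν * e₂) = (G * g₂) * μ + (G * e₂) * ν := by ring
        _ = g * μ + e * ν := by rw [← hg₂, ← he₂]
        _ = G := by linarith [hbez]
    exact mul_left_cancel₀ (by omega) h2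
  have hQ : IsUnit !![μ, -e₂; ν, g₂] := isUnit_m _ _ _ _ (Or.inl (by linarith))
  refine ⟨hQ.unit, G, hGpos, ?_⟩
  rw [IsUnit.unit_spec, Matrix.mul_fin_two]
  have e11 : g * μ + e * ν = G := by linarith
  have e12 : g * (-e₂) + e * g₂ = 0 := by linear_combination (-e₂) * hg₂ + g₂ * he₂
  rw [e11, e12]
  norm_num

lemma snf (A : M2) (hdet : A 0 0 * A 1 1 - A 0 1 * A 1 0 = 0) (hA : A ≠ 0) :
    ∃ (P Q : M2ˣ) (k : ℤ), 0 < k ∧ (P : M2) * A * (Q : M2) = !![k, 0; 0, 0] := by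
  have hAe : A = !![A 0 0, A 0 1; A 1 0, A 1 1] := Matrix.eta_fin_two A
  set p := A 0 0
  set q := A 0 1
  set r := A 1 0
  set s := A 1 1
  by_cases hpr : p = 0 ∧ r = 0
  · have hqs : q ≠ 0 ∨ s ≠ 0 := by
      by_contra hc
      push_neg at hc
      exact hA (by rw [hAe, hpr.1, hpr.2, hc.1, hc.2]; ext i j; fin_cases i <;> fin_cases j <;> simp)
    obtain ⟨P, g, e, hg, hP⟩ := row_reduce q p s r (by linear_combination -hdet) hqs
    obtain ⟨Q, k, hk, hQ⟩ := col_reduce g e hg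
    have hS : IsUnit !![(0:ℤ), 1; 1, 0] := isUnit_m _ _ _ _ (Or.inr (by norm_num))
    have hswap : A * !![(0:ℤ), 1; 1, 0] = !![q, p; s, r] := by
      rw [hAe, Matrix.mul_fin_two]; norm_num
    refine ⟨P, hS.unit * Q, k, hk, ?_⟩
    rw [Units.val_mul, IsUnit.unit_spec]
    calc (P : M2) * A * (!![(0:ℤ), 1; 1, 0] * (Q : M2))
        = ((P : M2) * (A * !![(0:ℤ), 1; 1, 0])) * (Q : M2) := by noncomm_ring
      _ = ((P : M2) * !![q, p; s, r]) * (Q : M2) := by rw [hswap]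
      _ = !![g, e; 0, 0] * (Q : M2) := by rw [hP]
      _ = !![k, 0; 0, 0] := hQ
  · have h : p ≠ 0 ∨ r ≠ 0 := by tauto
    obtain ⟨P, g, e, hg, hP⟩ := row_reduce p q r s hdet h
    obtain ⟨Q, k, hk, hQ⟩ := col_reduce g e hg
    refine ⟨P, Q, k, hk, ?_⟩
    calc (P : M2) * A * (Q : M2) = ((P : M2) * !![p, q; r, s]) * (Q : M2) := by rw [← hAe]
      _ = !![g, e; 0, 0] * (Q : M2) := by rw [hP]
      _ = !![k, 0; 0, 0] := hQ

theorem stmt19 (A : Matrix (Fin 2) (Fin 2) ℤ)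
    (hGM : ∀ X : Matrix (Fin 2) (Fin 2) ℤ, ∃ U : (Matrix (Fin 2) (Fin 2) ℤ)ˣ,
      IsUnit (X - (U : Matrix (Fin 2) (Fin 2) ℤ)) ∧
      IsUnit (A - ((U⁻¹ : (Matrix (Fin 2) (Fin 2) ℤ)ˣ) : Matrix (Fin 2) (Fin 2) ℤ))) :
    A = 0 := by
  have hGM' : GMcond A := hGM
  by_cases hA0 : A = 0
  · exact hA0
  · exfalso
    have hAe : A = !![A 0 0, A 0 1; A 1 0, A 1 1] := Matrix.eta_fin_two A
    have hGMe : GMcond !![A 0 0, A 0 1; A 1 0, A 1 1] := by rw [← hAe]; exact hGM'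
    have hdet : A 0 0 * A 1 1 - A 0 1 * A 1 0 = 0 := stepA _ _ _ _ hGMe
    obtain ⟨P, Q, k, hk, hPAQ⟩ := snf A hdet hA0
    have h3 := GM_transfer A hGM' P Q
    rw [hPAQ] at h3
    exact L3 k hk h3
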